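/- Let C ∈ M_n be positive semidefinite with C i i = 1 for every i (a correlation matrix). Then there exist p and vectors v_1,…,v_p ∈ ℂⁿ such that, writing D_i = Matrix.diagonal (v_i), for every X ∈ M_n one has X ∘ C = Σ_{i=1}^p D_i * X * D_iᴴ, and moreover Σ_i D_i * D_iᴴ = 1 and Σ_i D_iᴴ * D_i = 1. That is, the Schur product channel q(X) = X ∘ C is a unital quantum channel with diagonal Kraus operators. -/

import Mathlib

open Matrix
open scoped ComplexOrder

/-- for any correlation matrix `C` (positive semidefinite with unit diagonal) the
Schur product channel `X ↦ X ∘ C` is a unital quantum channel with diagonal Kraus operators: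
there exist vectors `vᵢ` with `X ∘ C = ∑ᵢ Dᵢ X Dᵢᴴ` for `Dᵢ = diagonal vᵢ`, and
`∑ᵢ Dᵢ Dᵢᴴ = 1 = ∑ᵢ Dᵢᴴ Dᵢ`. -/
theorem schur_product_channel_diagonal_kraus
    (n : ℕ) (C : Matrix (Fin n) (Fin n) ℂ)
    (hC : C.PosSemidef) (hdiag : ∀ i, C i i = 1) :
    ∃ (p : ℕ) (v : Fin p → (Fin n → ℂ)),
      (∀ X : Matrix (Fin n) (Fin n) ℂ,
        Matrix.hadamard X C
          = ∑ i, Matrix.diagonal (v i) * X * (Matrix.diagonal (v i))ᴴ)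
      ∧ ∑ i, Matrix.diagonal (v i) * (Matrix.diagonal (v i))ᴴ = 1
      ∧ ∑ i, (Matrix.diagonal (v i))ᴴ * Matrix.diagonal (v i) = 1 := by
  obtain ⟨B, hB⟩ : ∃ B : Matrix (Fin n) (Fin n) ℂ, C = Bᴴ * B := by
    open scoped MatrixOrder in
    obtain ⟨B, hB⟩ := CStarAlgebra.nonneg_iff_eq_star_mul_self.mp hC.nonneg
    exact ⟨B, hB⟩
  set v : Fin n → Fin n → ℂ := fun i j => star (B i j) with hv
  have key : ∀ j k, ∑ i, v i j * star (v i k) = C j k := by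
    intro j k
    have : C j k = ∑ i, star (B i j) * B i k := by
      rw [hB]; simp [Matrix.mul_apply, Matrix.conjTranspose_apply]
    rw [this]
    simp [hv]
  have term : ∀ (X : Matrix (Fin n) (Fin n) ℂ) i j k,
      (Matrix.diagonal (v i) * X * (Matrix.diagonal (v i))ᴴ) j k
        = v i j * X j k * star (v i k) := by
    intro X i j k
    rw [Matrix.diagonal_conjTranspose, Matrix.mul_assoc, Matrix.diagonal_mul,
      Matrix.mul_diagonal]
    simp [Pi.star_apply, mul_assoc]
  refine ⟨n, v, ?_, ?_, ?_⟩
  · intro X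
    ext j k
    rw [Matrix.sum_apply]
    simp only [term]
    rw [Matrix.hadamard_apply, ← key j k, Finset.mul_sum]
    congr 1; ext i; ring
  · ext j k
    rw [Matrix.sum_apply]
    by_cases h : j = k
    · subst h
      have : ∀ i, (Matrix.diagonal (v i) * (Matrix.diagonal (v i))ᴴ) j j
          = v i j * star (v i j) := by
        intro i
        rw [Matrix.diagonal_conjTranspose, Matrix.diagonal_mul_diagonal,
          Matrix.diagonal_apply_eq]
        simp [Pi.star_apply]
      simp only [this]
      have := key j j
      rw [this, hdiag j, Matrix.one_apply_eq]
    · have : ∀ i, (Matrix.diagonal (v i) * (Matrix.diagonal (v i))ᴴ) j k = 0 := by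
        intro i
        rw [Matrix.diagonal_conjTranspose, Matrix.diagonal_mul_diagonal,
          Matrix.diagonal_apply_ne _ h]
      rw [Finset.sum_eq_zero (fun i _ => this i), Matrix.one_apply_ne h]
  · ext j k
    rw [Matrix.sum_apply]
    by_cases h : j = k
    · subst h
      have : ∀ i, ((Matrix.diagonal (v i))ᴴ * Matrix.diagonal (v i)) j j
          = star (v i j) * v i j := by
        intro i
        rw [Matrix.diagonal_conjTranspose, Matrix.diagonal_mul_diagonal,
          Matrix.diagonal_apply_eq]
        simp [Pi.star_apply]
      simp only [this, mul_comm]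
      have := key j j
      rw [this, hdiag j, Matrix.one_apply_eq]
    · have : ∀ i, ((Matrix.diagonal (v i))ᴴ * Matrix.diagonal (v i)) j k = 0 := by
        intro i
        rw [Matrix.diagonal_conjTranspose, Matrix.diagonal_mul_diagonal,
          Matrix.diagonal_apply_ne _ h]
      rw [Finset.sum_eq_zero (fun i _ => this i), Matrix.one_apply_ne h]
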